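/- (Non-essentiality of naive enumerations, Section 3.1.4.) Let N be a finite set of voters, 𝒞 = {C_1,…,C_L} an M-winning coalition set on N, and i ∈ N a voter such that i ∈ C for some C ∈ 𝒞 and {i} ∉ 𝒞. Let S = (C_{σ(1)},…,C_{σ(L)}, {i}) where σ is any enumeration of 𝒞. Then for every index k with i ∈ C_{σ(k)}, the sequential unanimity rule associated with S agrees at every profile with the sequential unanimity rule associated with the sequence obtained from S by deleting C_{σ(k)}; in particular the sequential unanimity rule associated with S is not essential. -/
import Mathlib


/-- A rule is strategy-proof if whenever a voter's misreport would give his true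
preference, truthful reporting gives it as well. -/
def StrategyProof {N : Type*} [DecidableEq N] (f : (N → Bool) → Bool) : Prop :=
  ∀ (R : N → Bool) (i : N) (b : Bool), f (Function.update R i b) = R i → f R = R i

/-- A rule is neutral if it commutes with flipping the two candidates. -/
def Neutral {N : Type*} (f : (N → Bool) → Bool) : Prop :=
  ∀ R : N → Bool, f (fun i => !(R i)) = !(f R)

/-- An M-winning coalition set: nonempty, members nonempty, minimality (P1),
and Moulin's property (P2). -/
def IsMWCS {N : Type*} [DecidableEq N] (𝒞 : Set (Finset N)) : Prop :=
  𝒞.Nonempty ∧ (∀ C ∈ 𝒞, C.Nonempty) ∧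
    (∀ C ∈ 𝒞, ∀ C' ∈ 𝒞, C ⊆ C' → C = C') ∧
    (∀ C : Finset N, (∃ C' ∈ 𝒞, C' ⊆ C) ↔ ∀ C'' ∈ 𝒞, (C ∩ C'').Nonempty)

/-- `f` is the M-winning coalition rule associated with `𝒞`. -/
def IsMWCRule {N : Type*} (𝒞 : Set (Finset N)) (f : (N → Bool) → Bool) : Prop :=
  ∀ (R : N → Bool) (x : Bool), f R = x ↔ ∃ C ∈ 𝒞, ∀ i ∈ C, R i = x

/-- `g` is the sequential unanimity rule associated with the sequence `S`. -/
def IsSURule {N : Type*} {K : ℕ} (S : Fin K → Finset N) (g : (N → Bool) → Bool) : Prop :=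
  ∀ (R : N → Bool) (x : Bool),
    g R = x ↔ ∃ k : Fin K, (∀ i ∈ S k, R i = x) ∧
      ∀ l < k, ∃ i ∈ S l, ∃ j ∈ S l, R i ≠ R j

/-- Non-essentiality of naive enumerations: if S enumerates all of 𝒞 followed by a
backstop singleton {i} with {i} ∉ 𝒞, then deleting any term containing i leaves the
associated sequential unanimity rule unchanged; in particular that rule is not
essential. -/
theorem stmt17 {N : Type*} [Fintype N] [DecidableEq N] (𝒞 : Set (Finset N))
    (h𝒞 : IsMWCS 𝒞) {L : ℕ} (e : Fin L → Finset N)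
    (henum : Function.Injective e ∧ ∀ C : Finset N, C ∈ 𝒞 ↔ ∃ j : Fin L, e j = C)
    (i : N) (hi : ∃ C ∈ 𝒞, i ∈ C) (hi' : ({i} : Finset N) ∉ 𝒞)
    (g : (N → Bool) → Bool) (hg : IsSURule (Fin.snoc e ({i} : Finset N)) g) :
    (∀ k : Fin L, i ∈ e k →
      ∀ g' : (N → Bool) → Bool,
        IsSURule (fun l : Fin L =>
          (Fin.snoc e ({i} : Finset N) : Fin (L + 1) → Finset N)
            ((k.castSucc).succAbove l)) g' →
        ∀ R : N → Bool, g R = g' R) ∧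
    ¬ (∀ k : Fin L,
        ∀ g' : (N → Bool) → Bool,
          IsSURule (fun l : Fin L =>
            (Fin.snoc e ({i} : Finset N) : Fin (L + 1) → Finset N)
              ((k.castSucc).succAbove l)) g' →
          ∃ R : N → Bool, g R ≠ g' R) := by
  classical
  obtain ⟨hinj, hmem⟩ := henum
  obtain ⟨hCne0, hCne, hmin, hP2⟩ := h𝒞
  set F : Fin (L + 1) → Finset N := Fin.snoc e ({i} : Finset N) with hFdef
  -- any two winning coalitions intersect
  have hint : ∀ C ∈ 𝒞, ∀ C' ∈ 𝒞, (C ∩ C').Nonempty := fun C hC C' hC' =>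
    ((hP2 C).mp ⟨C, hC, subset_rfl⟩) C' hC'
  have heC : ∀ j : Fin L, e j ∈ 𝒞 := fun j => (hmem (e j)).mpr ⟨j, rfl⟩
  have hFcast : ∀ j : Fin L, F j.castSucc = e j := fun j => Fin.snoc_castSucc _ _ _
  have hFlast : F (Fin.last L) = ({i} : Finset N) := Fin.snoc_last _ _
  have hFne : ∀ m : Fin (L + 1), (F m).Nonempty := by
    intro m
    rcases Fin.eq_castSucc_or_eq_last m with ⟨j, rfl⟩ | rfl
    · rw [hFcast]; exact hCne _ (heC j)
    · rw [hFlast]; exact Finset.singleton_nonempty i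
  -- coherence: if e k (with i ∈ e k) is unanimous for x, any unanimous term has value x
  have hcoh : ∀ (k : Fin L), i ∈ e k → ∀ (R : N → Bool) (x : Bool),
      (∀ j ∈ e k, R j = x) → ∀ (m : Fin (L + 1)) (y : Bool),
      (∀ j ∈ F m, R j = y) → y = x := by
    intro k hk R x hx m y hy
    rcases Fin.eq_castSucc_or_eq_last m with ⟨j, rfl⟩ | rfl
    · rw [hFcast] at hy
      obtain ⟨a, ha⟩ := hint (e j) (heC j) (e k) (heC k)
      rw [Finset.mem_inter] at ha
      rw [← hy a ha.1, hx a ha.2]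
    · rw [hFlast] at hy
      rw [← hy i (Finset.mem_singleton_self i), hx i hk]
  -- key claim: the two existential characterizations agree
  have key : ∀ k : Fin L, i ∈ e k → ∀ (R : N → Bool) (x : Bool),
      (∃ m : Fin (L + 1), (∀ j ∈ F m, R j = x) ∧
        ∀ l < m, ∃ a ∈ F l, ∃ b ∈ F l, R a ≠ R b) ↔
      (∃ m' : Fin L, (∀ j ∈ F ((k.castSucc).succAbove m'), R j = x) ∧
        ∀ l < m', ∃ a ∈ F ((k.castSucc).succAbove l), ∃ b ∈ F ((k.castSucc).succAbove l),
          R a ≠ R b) := by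
    intro k hk R x
    have hL : 0 < L := lt_of_le_of_lt (Nat.zero_le _) k.2
    constructor
    · rintro ⟨m, hun, hsp⟩
      rcases lt_trichotomy m k.castSucc with hlt | heq | hgt
      · -- m before the deleted index
        have hmv : (m : ℕ) < L := lt_trans (by exact hlt) k.2
        have hcs : ((⟨(m : ℕ), hmv⟩ : Fin L)).castSucc < k.castSucc := by
          simpa [Fin.lt_def] using hlt
        have hsa : (k.castSucc).succAbove ⟨(m : ℕ), hmv⟩ = m := by
          rw [Fin.succAbove_of_castSucc_lt _ _ hcs]; exact Fin.ext rfl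
        refine ⟨⟨m, hmv⟩, by rw [hsa]; exact hun, ?_⟩
        intro l hl
        have h1 : (k.castSucc).succAbove l < m := by
          have : (k.castSucc).succAbove l < (k.castSucc).succAbove ⟨(m : ℕ), hmv⟩ :=
            Fin.succAbove_lt_succAbove_iff.mpr hl
          rwa [hsa] at this
        exact hsp _ h1
      · -- m is the deleted index: e k is unanimous for x
        subst heq
        rw [hFcast] at hun
        -- find the least non-split index in the shortened sequence
        set Sp : Fin L → Prop := fun l =>
          ∃ a ∈ F ((k.castSucc).succAbove l), ∃ b ∈ F ((k.castSucc).succAbove l), R a ≠ R b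
          with hSp
        have hlastL : ((k.castSucc).succAbove ⟨L - 1, Nat.sub_lt hL one_pos⟩) = Fin.last L := by
          rw [Fin.succAbove_of_le_castSucc]
          · exact Fin.ext (Nat.succ_pred_eq_of_pos hL)
          · exact Nat.le_pred_of_lt k.2
        have hsne : (Finset.univ.filter (fun l : Fin L => ¬ Sp l)).Nonempty := by
          refine ⟨⟨L - 1, Nat.sub_lt hL one_pos⟩, ?_⟩
          rw [Finset.mem_filter]
          refine ⟨Finset.mem_univ _, ?_⟩
          rintro ⟨a, ha, b, hb, hab⟩
          rw [hlastL, hFlast, Finset.mem_singleton] at ha hb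
          exact hab (ha ▸ hb ▸ rfl)
        set m' := (Finset.univ.filter (fun l : Fin L => ¬ Sp l)).min' hsne with hm'
        have hm'mem : ¬ Sp m' := by
          have := Finset.min'_mem _ hsne
          rw [Finset.mem_filter] at this
          exact this.2
        have hm'min : ∀ l < m', Sp l := by
          intro l hl
          by_contra hc
          have : m' ≤ l := Finset.min'_le _ l (Finset.mem_filter.mpr ⟨Finset.mem_univ l, hc⟩)
          exact absurd hl (not_lt.mpr this)
        -- the value at m' is x
        obtain ⟨a, ha⟩ := hFne ((k.castSucc).succAbove m')
        have huny : ∀ j ∈ F ((k.castSucc).succAbove m'), R j = R a := by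
          intro j hj
          by_contra hc
          exact hm'mem ⟨j, hj, a, ha, hc⟩
        have hax : R a = x := hcoh k hk R x hun _ _ huny
        exact ⟨m', fun j hj => (huny j hj).trans hax, hm'min⟩
      · -- m after the deleted index
        have hm1 : 1 ≤ (m : ℕ) := lt_of_le_of_lt (Nat.zero_le _) hgt
        have hmv : (m : ℕ) - 1 < L :=
          lt_of_lt_of_le (Nat.sub_lt (lt_of_lt_of_le one_pos hm1) one_pos)
            (Nat.lt_succ_iff.mp m.2)
        have hmap : (k.castSucc).succAbove ⟨(m : ℕ) - 1, hmv⟩ = m := by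
          rw [Fin.succAbove_of_le_castSucc]
          · exact Fin.ext (Nat.succ_pred_eq_of_pos (lt_of_lt_of_le one_pos hm1))
          · exact Nat.le_pred_of_lt hgt
        refine ⟨⟨(m : ℕ) - 1, hmv⟩, by rw [hmap]; exact hun, ?_⟩
        intro l hl
        have h1 : (k.castSucc).succAbove l < m := by
          have : (k.castSucc).succAbove l < (k.castSucc).succAbove ⟨(m : ℕ) - 1, hmv⟩ :=
            Fin.succAbove_lt_succAbove_iff.mpr hl
          rwa [hmap] at this
        exact hsp _ h1
    · rintro ⟨m', hun, hsp⟩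
      set m := (k.castSucc).succAbove m' with hmdef
      have hmne : m ≠ k.castSucc := Fin.succAbove_ne _ _
      rcases lt_or_gt_of_ne hmne with hlt | hgt
      · -- m < k.castSucc : witness m
        refine ⟨m, hun, ?_⟩
        intro l hl
        have hlne : l ≠ k.castSucc := ne_of_lt (lt_trans hl hlt)
        obtain ⟨l', hl'⟩ := Fin.exists_succAbove_eq hlne
        have : l' < m' := Fin.succAbove_lt_succAbove_iff.mp (hl' ▸ hl)
        rw [← hl']
        exact hsp l' this
      · -- k.castSucc < m
        by_cases hsk : ∃ a ∈ e k, ∃ b ∈ e k, R a ≠ R b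
        · refine ⟨m, hun, ?_⟩
          intro l hl
          by_cases hlne : l = k.castSucc
          · subst hlne
            rw [hFcast]
            exact hsk
          · obtain ⟨l', hl'⟩ := Fin.exists_succAbove_eq hlne
            have : l' < m' := Fin.succAbove_lt_succAbove_iff.mp (hl' ▸ hl)
            rw [← hl']
            exact hsp l' this
        · -- e k is unanimous for some y; y must equal x
          push_neg at hsk
          obtain ⟨a, ha⟩ := hCne _ (heC k)
          have hy : ∀ j ∈ e k, R j = R a := fun j hj => by
            by_contra hc
            exact hc ((hsk j hj a ha).symm ▸ rfl)
          have hxy : x = R a := hcoh k hk R (R a) hy m x hun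
          refine ⟨k.castSucc, ?_, ?_⟩
          · rw [hFcast]
            exact fun j hj => (hy j hj).trans hxy.symm
          · intro l hl
            have hlne : l ≠ k.castSucc := ne_of_lt hl
            obtain ⟨l', hl'⟩ := Fin.exists_succAbove_eq hlne
            have : l' < m' := Fin.succAbove_lt_succAbove_iff.mp
              (by rw [hl']; exact lt_trans hl hgt)
            rw [← hl']
            exact hsp l' this
  constructor
  · intro k hk g' hg' R
    have h1 := (hg' R (g' R)).mp rfl
    have h2 := (key k hk R (g' R)).mpr h1
    exact (hg R (g' R)).mpr h2
  · intro H
    obtain ⟨C, hC, hiC⟩ := hi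
    obtain ⟨k, hek⟩ := (hmem C).mp hC
    have hk : i ∈ e k := hek ▸ hiC
    have hgSU : IsSURule (fun l : Fin L =>
        (Fin.snoc e ({i} : Finset N) : Fin (L + 1) → Finset N)
          ((k.castSucc).succAbove l)) g := by
      intro R x
      exact (hg R x).trans (key k hk R x)
    obtain ⟨R, hR⟩ := H k g hgSU
    exact hR rfl
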